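/- Let n ≥ 1 and let R = ℂ[a₁, a₂] / ⟨r_n(a₁,a₂), a₁^{n+1}, a₂^{n+1}⟩ where r_n(x,y) = x^n + x^{n−1}y + ⋯ + y^n. Then in R the product a₁^{n−1} · a₂^n is nonzero. -/

import Mathlib

open scoped LinearAlgebra.Projectivization Simplicial

open MvPolynomial in
/-- `r_n(x, y) = xⁿ + xⁿ⁻¹y + ⋯ + yⁿ = Σ_{i=0}^{n} x^{n-i} y^{i}` in `ℂ[a₁, a₂]`. -/
noncomputable def rPoly (n : ℕ) : MvPolynomial (Fin 2) ℂ :=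
  ∑ i ∈ Finset.range (n + 1), X 0 ^ (n - i) * X 1 ^ i

open MvPolynomial in
/-- The ideal `⟨r_n(a₁,a₂), a₁^{n+1}, a₂^{n+1}⟩` of `ℂ[a₁, a₂]`. -/
noncomputable def confIdeal (n : ℕ) : Ideal (MvPolynomial (Fin 2) ℂ) :=
  Ideal.span {rPoly n, X 0 ^ (n + 1), X 1 ^ (n + 1)}

/-- `R = ℂ[a₁,a₂] / ⟨r_n(a₁,a₂), a₁^{n+1}, a₂^{n+1}⟩`, the cohomology ring
`H*(F(ℂPⁿ,2); ℂ)` (with `deg a₁ = deg a₂ = 2`). -/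
abbrev CohRing (n : ℕ) : Type _ := MvPolynomial (Fin 2) ℂ ⧸ confIdeal n

/-- The class of `a₁` in `R`. -/
noncomputable def a₁ (n : ℕ) : CohRing n := Ideal.Quotient.mk _ (MvPolynomial.X 0)

/-- The class of `a₂` in `R`. -/
noncomputable def a₂ (n : ℕ) : CohRing n := Ideal.Quotient.mk _ (MvPolynomial.X 1)

open Polynomial

/-- `A = ℂ[y]/(y^{n+1})`. -/
noncomputable abbrev Aux.A (n : ℕ) : Type := AdjoinRoot (X ^ (n + 1) : ℂ[X])

/-- `y ∈ A`. -/
noncomputable def Aux.y (n : ℕ) : Aux.A n := AdjoinRoot.root _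

/-- `p = Σ_{i=0}^{n} x^{n-i} y^i ∈ A[x]`, monic of degree `n`. -/
noncomputable def Aux.p (n : ℕ) : Polynomial (Aux.A n) :=
  ∑ i ∈ Finset.range (n + 1), X ^ (n - i) * C (Aux.y n) ^ i

namespace Aux

instance (n : ℕ) : Nontrivial (A n) :=
  AdjoinRoot.nontrivial _ (by
    rw [Polynomial.degree_X_pow]
    exact_mod_cast Nat.succ_ne_zero n)

lemma y_pow_succ (n : ℕ) : y n ^ (n + 1) = 0 := by
  have := AdjoinRoot.eval₂_root (X ^ (n + 1) : ℂ[X])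
  simpa [y] using this

lemma y_pow_ne_zero (n : ℕ) : y n ^ n ≠ 0 := by
  have : (AdjoinRoot.mk (X ^ (n + 1) : ℂ[X])) (X ^ n) ≠ 0 := by
    rw [Ne, AdjoinRoot.mk_eq_zero]
    intro h
    have h0 : (X ^ n : ℂ[X]) ≠ 0 := pow_ne_zero _ X_ne_zero
    have := Polynomial.natDegree_le_of_dvd h h0
    simp at this
  simpa [y] using this

lemma degree_rest_lt (n : ℕ) (hn : 1 ≤ n) :
    (∑ i ∈ Finset.range n, (X : Polynomial (A n)) ^ (n - (i + 1)) * C (y n) ^ (i + 1)).degree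
      < (n : WithBot ℕ) := by
  apply lt_of_le_of_lt (Polynomial.degree_sum_le _ _)
  rw [Finset.sup_lt_iff (by exact_mod_cast WithBot.bot_lt_coe n)]
  intro i hi
  apply lt_of_le_of_lt (Polynomial.degree_mul_le _ _)
  have h1 : ((X : Polynomial (A n)) ^ (n - (i + 1))).degree ≤ ((n - 1 : ℕ) : WithBot ℕ) := by
    rw [degree_X_pow]
    exact_mod_cast Nat.sub_le_sub_left (by omega) n
  have h2 : ((C (y n) : Polynomial (A n)) ^ (i + 1)).degree ≤ 0 := by
    simpa using Polynomial.degree_C_le (a := y n ^ (i + 1))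
  calc ((X : Polynomial (A n)) ^ (n - (i + 1))).degree + (C (y n) ^ (i + 1)).degree
      ≤ ((n - 1 : ℕ) : WithBot ℕ) + 0 := add_le_add h1 h2
    _ < (n : WithBot ℕ) := by
        rw [add_zero]
        exact_mod_cast Nat.sub_lt hn one_pos

lemma p_eq (n : ℕ) :
    p n = X ^ n + ∑ i ∈ Finset.range n, (X : Polynomial (A n)) ^ (n - (i + 1)) * C (y n) ^ (i + 1) := by
  rw [p, Finset.sum_range_succ']
  simp [add_comm]

lemma monic_p (n : ℕ) (hn : 1 ≤ n) : (p n).Monic := by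
  rw [p_eq]
  exact Polynomial.monic_X_pow_add (degree_rest_lt n hn)

lemma degree_p (n : ℕ) (hn : 1 ≤ n) : (p n).degree = n := by
  rw [p_eq, Polynomial.degree_add_eq_left_of_degree_lt]
  · exact degree_X_pow n
  · rw [degree_X_pow]; exact degree_rest_lt n hn

/-- `B = A[x]/(p)`. -/
noncomputable abbrev B (n : ℕ) : Type := AdjoinRoot (p n)

noncomputable def xB (n : ℕ) : B n := AdjoinRoot.root (p n)
noncomputable def yB (n : ℕ) : B n := AdjoinRoot.of (p n) (y n)

lemma sum_eq_zero (n : ℕ) :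
    ∑ i ∈ Finset.range (n + 1), xB n ^ (n - i) * yB n ^ i = 0 := by
  have h := AdjoinRoot.eval₂_root (p n)
  conv at h => lhs; arg 3; rw [p]
  simp only [Polynomial.eval₂_finset_sum, Polynomial.eval₂_mul, Polynomial.eval₂_pow,
    Polynomial.eval₂_X, Polynomial.eval₂_C] at h
  simpa [xB, yB] using h

lemma yB_pow_succ (n : ℕ) : yB n ^ (n + 1) = 0 := by
  rw [yB, ← map_pow, y_pow_succ, map_zero]

lemma xB_pow_succ (n : ℕ) : xB n ^ (n + 1) = 0 := by
  have hg := Commute.geom_sum₂_mul (Commute.all (xB n) (yB n)) (n + 1)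
  -- (∑ i in range (n+1), x ^ i * y ^ (n - i)) * (x - y) = x ^ (n+1) - y ^ (n+1)
  have hs : ∑ i ∈ Finset.range (n + 1), xB n ^ i * yB n ^ (n - i) = 0 := by
    rw [← Finset.sum_range_reflect, ← sum_eq_zero n]
    apply Finset.sum_congr rfl
    intro i hi
    simp only [Finset.mem_range] at hi
    congr 1 <;> congr 1 <;> omega
  have : xB n ^ (n + 1) - yB n ^ (n + 1) = 0 := by
    rw [← hg]
    simp only [Nat.add_sub_cancel] at hs ⊢
    rw [hs, zero_mul]
  have h2 := yB_pow_succ n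
  rw [h2] at this
  simpa using this

/-- The algebra map `ℂ[a₁,a₂] → B` sending `a₁ ↦ x`, `a₂ ↦ y`. -/
noncomputable def φ (n : ℕ) : MvPolynomial (Fin 2) ℂ →+* B n :=
  (MvPolynomial.aeval ![xB n, yB n] : MvPolynomial (Fin 2) ℂ →ₐ[ℂ] B n).toRingHom

lemma ideal_le_ker (n : ℕ) : confIdeal n ≤ RingHom.ker (φ n) := by
  rw [confIdeal, Ideal.span_le]
  rintro f hf
  simp only [Set.mem_insert_iff, Set.mem_singleton_iff] at hf
  rcases hf with rfl | rfl | rfl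
  · show φ n (rPoly n) = 0
    rw [rPoly, φ]
    simp only [AlgHom.toRingHom_eq_coe, RingHom.coe_coe, map_sum, map_mul, map_pow,
      MvPolynomial.aeval_X, Matrix.cons_val_zero, Matrix.cons_val_one, Matrix.head_cons]
    exact sum_eq_zero n
  · show φ n (MvPolynomial.X 0 ^ (n + 1)) = 0
    rw [φ]
    simp only [AlgHom.toRingHom_eq_coe, RingHom.coe_coe, map_pow, MvPolynomial.aeval_X,
      Matrix.cons_val_zero]
    exact xB_pow_succ n
  · show φ n (MvPolynomial.X 1 ^ (n + 1)) = 0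
    rw [φ]
    simp only [AlgHom.toRingHom_eq_coe, RingHom.coe_coe, map_pow, MvPolynomial.aeval_X,
      Matrix.cons_val_one, Matrix.head_cons]
    exact yB_pow_succ n

lemma target_ne_zero (n : ℕ) (hn : 1 ≤ n) : xB n ^ (n - 1) * yB n ^ n ≠ 0 := by
  have hq : xB n ^ (n - 1) * yB n ^ n
      = AdjoinRoot.mk (p n) (X ^ (n - 1) * C (y n ^ n)) := by
    rw [map_mul, map_pow, AdjoinRoot.mk_X, xB, yB]
    congr 1
    rw [Polynomial.C_pow, map_pow]
    rfl
  rw [hq]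
  apply AdjoinRoot.mk_ne_zero_of_degree_lt (monic_p n hn)
  · rw [mul_comm, Polynomial.C_mul_X_pow_eq_monomial, Ne,
      Polynomial.monomial_eq_zero_iff]
    exact y_pow_ne_zero n
  · rw [degree_p n hn]
    apply lt_of_le_of_lt (Polynomial.degree_mul_le _ _)
    have h1 : ((X : Polynomial (A n)) ^ (n - 1)).degree = ((n - 1 : ℕ) : WithBot ℕ) :=
      degree_X_pow _
    have h2 : (C (y n ^ n) : Polynomial (A n)).degree ≤ 0 := Polynomial.degree_C_le
    calc ((X : Polynomial (A n)) ^ (n - 1)).degree + (C (y n ^ n)).degree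
        ≤ ((n - 1 : ℕ) : WithBot ℕ) + 0 := add_le_add h1.le h2
      _ < (n : WithBot ℕ) := by
          rw [add_zero]; exact_mod_cast Nat.sub_lt hn one_pos

end Aux

/-- **Theorem.** In `R = ℂ[a₁,a₂]/⟨r_n(a₁,a₂), a₁^{n+1}, a₂^{n+1}⟩` (`n ≥ 1`),
the product `a₁^{n-1} · a₂ⁿ` is nonzero. -/
theorem a1_pow_pred_mul_a2_pow_n_ne_zero (n : ℕ) (hn : 1 ≤ n) :
    a₁ n ^ (n - 1) * a₂ n ^ n ≠ 0 := by
  intro h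
  have hmem : (MvPolynomial.X 0 ^ (n - 1) * MvPolynomial.X 1 ^ n :
      MvPolynomial (Fin 2) ℂ) ∈ confIdeal n := by
    rw [← Ideal.Quotient.eq_zero_iff_mem]
    simpa [a₁, a₂, map_mul, map_pow] using h
  have h0 : Aux.φ n (MvPolynomial.X 0 ^ (n - 1) * MvPolynomial.X 1 ^ n) = 0 :=
    Aux.ideal_le_ker n hmem
  rw [Aux.φ] at h0
  simp only [AlgHom.toRingHom_eq_coe, RingHom.coe_coe, map_mul, map_pow, MvPolynomial.aeval_X,
    Matrix.cons_val_zero, Matrix.cons_val_one, Matrix.head_cons] at h0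
  exact Aux.target_ne_zero n hn h0
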